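/- For all real numbers α1, α2, α3 > 0 there exists a positive integer n0 = n0(α1, α2, α3) such that for every integer n > n0, R(C_{⟨⟨α1 n⟩⟩}, C_{⟨⟨α2 n⟩⟩}, C_{⟨α3 n⟩}) ≥ max{ 2⟨⟨α1 n⟩⟩ + ⟨⟨α2 n⟩⟩ − 3, (1/2)⟨⟨α1 n⟩⟩ + (1/2)⟨⟨α2 n⟩⟩ + ⟨α3 n⟩ − 2 }; that is, there exists a three-colouring of the edges of the complete graph on max{ 2⟨⟨α1 n⟩⟩ + ⟨⟨α2 n⟩⟩ − 4, (1/2)⟨⟨α1 n⟩⟩ + (1/2)⟨⟨α2 n⟩⟩ + ⟨α3 n⟩ − 3 } vertices containing no cycle on ⟨⟨α1 n⟩⟩ vertices in colour 1, no cycle on ⟨⟨α2 n⟩⟩ vertices in colour 2, and no cycle on ⟨α3 n⟩ vertices in colour 3. -/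

import Mathlib

open SimpleGraph

/-- The largest even integer not greater than `x`. -/
noncomputable def evenFloor (x : ℝ) : ℤ := 2 * ⌊x / 2⌋

/-- The largest odd integer not greater than `x`. -/
noncomputable def oddFloor (x : ℝ) : ℤ := 2 * ⌊(x - 1) / 2⌋ + 1

/-- `G` contains a cycle on exactly `m` vertices. -/
def HasCycleLen {V : Type*} (G : SimpleGraph V) (m : ℕ) : Prop :=
  ∃ (v : V) (w : G.Walk v v), w.IsCycle ∧ w.length = m

/-- The colour-`i` subgraph of the complete graph on `V` whose edges are coloured by `χ`. -/
def colourGraph {V : Type*} (χ : Sym2 V → Fin 3) (i : Fin 3) : SimpleGraph V where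
  Adj u v := u ≠ v ∧ χ s(u, v) = i
  symm := by
    refine ⟨fun u v h => ?_⟩
    refine ⟨h.1.symm, ?_⟩
    rw [Sym2.eq_swap]
    exact h.2
  loopless := ⟨fun u h => h.1 rfl⟩

/-- Every 3-colouring of the edges of the complete graph on `N` vertices yields, for some
`i ∈ {1,2,3}`, a cycle on `mᵢ` vertices all of whose edges have colour `i`. -/
def CycleRamseyProp (m₁ m₂ m₃ N : ℕ) : Prop :=
  ∀ χ : Sym2 (Fin N) → Fin 3,
    HasCycleLen (colourGraph χ 0) m₁ ∨ HasCycleLen (colourGraph χ 1) m₂ ∨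
      HasCycleLen (colourGraph χ 2) m₃

/-- The degree of `v` in `G`. -/
noncomputable def ndeg {V : Type*} (G : SimpleGraph V) (v : V) : ℕ :=
  {u : V | G.Adj v u}.ncard

/-- The number of neighbours of `v` inside the set `S`. -/
noncomputable def degIn {V : Type*} (G : SimpleGraph V) (S : Finset V) (v : V) : ℕ :=
  {u : V | u ∈ S ∧ G.Adj v u}.ncard

/-- The number of ordered pairs `(a, b) ∈ A × B` with `a` adjacent to `b` in `G`. -/
noncomputable def pairCount {V : Type*} (G : SimpleGraph V) (A B : Finset V) : ℕ :=
  {p : V × V | p.1 ∈ A ∧ p.2 ∈ B ∧ G.Adj p.1 p.2}.ncard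

/-- The density `d(A,B)` of the pair `(A, B)` in `G`. -/
noncomputable def density {V : Type*} (G : SimpleGraph V) (A B : Finset V) : ℝ :=
  (pairCount G A B : ℝ) / ((A.card : ℝ) * (B.card : ℝ))

/-- The pair `(A, B)` is `(ε, G)`-regular. -/
def IsRegularPair {V : Type*} (G : SimpleGraph V) (ε : ℝ) (A B : Finset V) : Prop :=
  ∀ A' ⊆ A, ∀ B' ⊆ B, ε * (A.card : ℝ) ≤ (A'.card : ℝ) →
    ε * (B.card : ℝ) ≤ (B'.card : ℝ) →
    |density G A' B' - density G A B| < ε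

/-- The pair `(A, B)` is simultaneously `(ε, Gᵣ)`-regular for `r = 1, 2, 3`. -/
def SimRegular {V : Type*} (ε : ℝ) (G₁ G₂ G₃ : SimpleGraph V) (A B : Finset V) : Prop :=
  IsRegularPair G₁ ε A B ∧ IsRegularPair G₂ ε A B ∧ IsRegularPair G₃ ε A B

/-- `M` is a connected-matching in `G`: a collection of edges, pairwise vertex-disjoint,
all lying in the same connected component of `G`. -/
def IsConnMatching {V : Type*} (G : SimpleGraph V) (M : Finset (V × V)) : Prop :=
  (∀ e ∈ M, G.Adj e.1 e.2) ∧
  (∀ e ∈ M, ∀ f ∈ M, e ≠ f → e.1 ≠ f.1 ∧ e.1 ≠ f.2 ∧ e.2 ≠ f.1 ∧ e.2 ≠ f.2) ∧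
  (∀ e ∈ M, ∀ f ∈ M, G.Reachable e.1 f.1)

/-- `G` contains a connected-matching on at least `m` vertices. -/
def HasConnMatching {V : Type*} (G : SimpleGraph V) (m : ℝ) : Prop :=
  ∃ M : Finset (V × V), IsConnMatching G M ∧ m ≤ 2 * (M.card : ℝ)

/-- `G` contains an odd connected-matching on at least `m` vertices: a connected-matching
whose component also contains an odd cycle. -/
def HasOddConnMatching {V : Type*} (G : SimpleGraph V) (m : ℝ) : Prop :=
  ∃ M : Finset (V × V), IsConnMatching G M ∧ m ≤ 2 * (M.card : ℝ) ∧
    ∃ (v : V) (w : G.Walk v v), w.IsCycle ∧ Odd w.length ∧ ∀ e ∈ M, G.Reachable e.1 v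

/-- `(V₀, V₁, …, V_K)` (given as `P : Fin (K+1) → Finset V`, with `P 0` the exceptional class)
is an `(ε, G₁, G₂, G₃)`-regular partition. -/
def IsRegularPartition3 {V : Type*} [Fintype V] (ε : ℝ) (G₁ G₂ G₃ : SimpleGraph V)
    {K : ℕ} (P : Fin (K + 1) → Finset V) : Prop :=
  (∀ i j, i ≠ j → Disjoint (P i) (P j)) ∧
  (∀ v : V, ∃ i, v ∈ P i) ∧
  ((P 0).card : ℝ) ≤ ε * (Fintype.card V : ℝ) ∧
  (∀ i j : Fin (K + 1), i ≠ 0 → j ≠ 0 → (P i).card = (P j).card) ∧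
  (∀ i : Fin (K + 1), i ≠ 0 →
    (({j : Fin (K + 1) | j ≠ 0 ∧ j ≠ i ∧
        ¬ SimRegular ε G₁ G₂ G₃ (P i) (P j)}.ncard : ℝ) ≤ ε * K))

/-- The colour-`Gc` subgraph of the three-multicoloured `(ε, ξ, Π)`-reduced-graph of the
three-coloured graph with colour subgraphs `G₁, G₂, G₃` and regular partition `P`:
vertices are the non-exceptional classes `P 1, …, P K`; two of them are adjacent if the pair is
simultaneously `(ε, Gᵣ)`-regular for `r = 1,2,3` and receive colour `Gc` if moreover the
`Gc`-density of the pair is at least `ξ`. -/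
def reducedGraph {V : Type*} (ε ξ : ℝ) (G₁ G₂ G₃ : SimpleGraph V) {K : ℕ}
    (P : Fin (K + 1) → Finset V) (Gc : SimpleGraph V) : SimpleGraph (Fin K) where
  Adj a b := a ≠ b ∧
    (SimRegular ε G₁ G₂ G₃ (P a.succ) (P b.succ) ∧
      SimRegular ε G₁ G₂ G₃ (P b.succ) (P a.succ)) ∧
    (ξ ≤ density Gc (P a.succ) (P b.succ) ∧ ξ ≤ density Gc (P b.succ) (P a.succ))
  symm := by
    refine ⟨fun a b h => ?_⟩
    exact ⟨h.1.symm, ⟨h.2.1.2, h.2.1.1⟩, ⟨h.2.2.2, h.2.2.1⟩⟩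
  loopless := ⟨fun a h => h.1 rfl⟩

/-- The two-multicoloured graph induced on `X`, with colour subgraphs `Gγ₁` (colour `γ₁`)
and `Gγ₂` (colour `γ₂`), contains a two-multicoloured spanning subgraph belonging to the class
`H(x₁, x₂, c₁, c₂, γ₁, γ₂)`. -/
def ContainsClassH {V : Type*} [DecidableEq V] (Gγ₁ Gγ₂ : SimpleGraph V) (X : Finset V)
    (x₁ x₂ c₁ c₂ : ℝ) : Prop :=
  ∃ (H₁ H₂ : SimpleGraph V) (X₁ X₂ : Finset V),
    H₁ ≤ Gγ₁ ∧ H₂ ≤ Gγ₂ ∧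
    (∀ u v : V, (H₁ ⊔ H₂).Adj u v → u ∈ X ∧ v ∈ X) ∧
    Disjoint X₁ X₂ ∧ X₁ ∪ X₂ = X ∧
    x₁ ≤ (X₁.card : ℝ) ∧ x₂ ≤ (X₂.card : ℝ) ∧
    (∀ v ∈ X, ((X.card : ℝ) - 1) - c₁ ≤ (degIn (H₁ ⊔ H₂) X v : ℝ)) ∧
    (∀ v ∈ X₁, (1 - c₂) * ((X₁.card : ℝ) - 1) ≤ (degIn H₁ X₁ v : ℝ)) ∧
    (∀ v ∈ X₁, (degIn H₂ X₁ v : ℝ) ≤ c₂ * ((X₁.card : ℝ) - 1)) ∧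
    (∀ v ∈ X₁, (1 - c₂) * (X₂.card : ℝ) ≤ (degIn H₂ X₂ v : ℝ)) ∧
    (∀ v ∈ X₂, (1 - c₂) * (X₁.card : ℝ) ≤ (degIn H₂ X₁ v : ℝ)) ∧
    (∀ v ∈ X₁, (degIn H₁ X₂ v : ℝ) ≤ c₂ * (X₂.card : ℝ)) ∧
    (∀ v ∈ X₂, (degIn H₁ X₁ v : ℝ) ≤ c₂ * (X₁.card : ℝ))

/-- Membership of the structure `H((a − 2η^{1/32})k, (b/2 − 2η^{1/32})k, 3η⁴k, η^{1/32}, γ₁, γ₂)`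
on a vertex set `X`, where `Ga`, `Gb` are the colour-`γ₁` and colour-`γ₂` subgraphs. -/
def MemH1 {V : Type*} [DecidableEq V] (Ga Gb : SimpleGraph V) (a b η : ℝ) (k : ℕ)
    (X : Finset V) : Prop :=
  ContainsClassH Ga Gb X ((a - 2 * η ^ ((1 : ℝ) / 32)) * k)
    ((b / 2 - 2 * η ^ ((1 : ℝ) / 32)) * k) (3 * η ^ 4 * k) (η ^ ((1 : ℝ) / 32))

/-- The edge `uv` is coloured exclusively with the colour of `Ga` (and not the colours of
`Gb`, `Gc`). -/
def ExclColour {V : Type*} (Ga Gb Gc : SimpleGraph V) (u v : V) : Prop :=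
  Ga.Adj u v ∧ ¬ Gb.Adj u v ∧ ¬ Gc.Adj u v

/-- The three-multicoloured graph with colour subgraphs `G₁, G₂, G₃` (red, blue, green)
contains a subgraph from the class `K(x₁, x₂, x₃, c)`. -/
def ContainsClassK {V : Type*} [DecidableEq V] (G₁ G₂ G₃ : SimpleGraph V)
    (x₁ x₂ x₃ c : ℝ) : Prop :=
  ∃ (H : SimpleGraph V) (X₁ X₂ X₃ : Finset V),
    H ≤ G₁ ⊔ G₂ ⊔ G₃ ∧
    Disjoint X₁ X₂ ∧ Disjoint X₁ X₃ ∧ Disjoint X₂ X₃ ∧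
    x₁ ≤ (X₁.card : ℝ) ∧ x₂ ≤ (X₂.card : ℝ) ∧ x₃ ≤ (X₃.card : ℝ) ∧
    (∀ u v : V, H.Adj u v → u ∈ X₁ ∪ X₂ ∪ X₃ ∧ v ∈ X₁ ∪ X₂ ∪ X₃) ∧
    (∀ v ∈ X₁ ∪ X₂ ∪ X₃,
      (((X₁ ∪ X₂ ∪ X₃).card : ℝ) - 1) - c ≤ (degIn H (X₁ ∪ X₂ ∪ X₃) v : ℝ)) ∧
    (∀ u ∈ X₁, ∀ v ∈ X₃, H.Adj u v → ExclColour G₁ G₂ G₃ u v) ∧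
    (∀ u ∈ X₂, ∀ v ∈ X₃, H.Adj u v → ExclColour G₂ G₁ G₃ u v) ∧
    (∀ u ∈ X₃, ∀ v ∈ X₃, H.Adj u v → ExclColour G₃ G₁ G₂ u v)

/-- The three-multicoloured graph with colour subgraphs `G₁, G₂, G₃` (red, blue, green)
contains a subgraph from the class `K*(x₁, x₂, y₁, y₂, z, c)`. -/
def ContainsClassKstar {V : Type*} [DecidableEq V] (G₁ G₂ G₃ : SimpleGraph V)
    (x₁ x₂ y₁ y₂ z c : ℝ) : Prop :=
  ∃ (H : SimpleGraph V) (X₁ X₂ Y₁ Y₂ : Finset V),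
    H ≤ G₁ ⊔ G₂ ⊔ G₃ ∧
    Disjoint X₁ X₂ ∧ Disjoint X₁ Y₁ ∧ Disjoint X₁ Y₂ ∧
    Disjoint X₂ Y₁ ∧ Disjoint X₂ Y₂ ∧ Disjoint Y₁ Y₂ ∧
    x₁ ≤ (X₁.card : ℝ) ∧ x₂ ≤ (X₂.card : ℝ) ∧ y₁ ≤ (Y₁.card : ℝ) ∧ y₂ ≤ (Y₂.card : ℝ) ∧
    z ≤ (Y₁.card : ℝ) + (Y₂.card : ℝ) ∧
    (∀ u v : V, H.Adj u v → u ∈ X₁ ∪ X₂ ∪ Y₁ ∪ Y₂ ∧ v ∈ X₁ ∪ X₂ ∪ Y₁ ∪ Y₂) ∧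
    (∀ v ∈ X₁ ∪ X₂ ∪ Y₁ ∪ Y₂,
      (((X₁ ∪ X₂ ∪ Y₁ ∪ Y₂).card : ℝ) - 1) - c ≤ (degIn H (X₁ ∪ X₂ ∪ Y₁ ∪ Y₂) v : ℝ)) ∧
    (∀ u ∈ X₁, ∀ v ∈ Y₁, H.Adj u v → ExclColour G₁ G₂ G₃ u v) ∧
    (∀ u ∈ X₂, ∀ v ∈ Y₂, H.Adj u v → ExclColour G₁ G₂ G₃ u v) ∧
    (∀ u ∈ X₁, ∀ v ∈ Y₂, H.Adj u v → ExclColour G₂ G₁ G₃ u v) ∧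
    (∀ u ∈ X₂, ∀ v ∈ Y₁, H.Adj u v → ExclColour G₂ G₁ G₃ u v) ∧
    (∀ u ∈ X₁, ∀ v ∈ X₂, H.Adj u v → ExclColour G₃ G₁ G₂ u v) ∧
    (∀ u ∈ Y₁, ∀ v ∈ Y₂, H.Adj u v → ExclColour G₃ G₁ G₂ u v)


section Helpers
variable {V : Type*} {G : SimpleGraph V}

lemma my_getVert_eq_support_get {u v : V} (w : G.Walk u v) (i : ℕ) (hi : i < w.support.length) :
    w.support.get ⟨i, hi⟩ = w.getVert i := by
  induction w generalizing i with
  | nil =>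
    cases i with
    | zero => simp [SimpleGraph.Walk.getVert]
    | succ n => simp [SimpleGraph.Walk.support_nil] at hi
  | cons h p ih =>
    cases i with
    | zero => simp [SimpleGraph.Walk.getVert]
    | succ n =>
      have hn : n < p.support.length := by
        simpa [SimpleGraph.Walk.support_cons] using hi
      simp only [SimpleGraph.Walk.support_cons, List.get_cons_succ,
        SimpleGraph.Walk.getVert_cons_succ]
      exact ih n hn

lemma walk_parity (f : V → Bool) (P : V → Prop)
    (h : ∀ a b, G.Adj a b → P a → P b ∧ f a ≠ f b) :
    ∀ {u v : V} (w : G.Walk u v), P u → (f u = f v ↔ Even w.length) := by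
  intro u v w
  induction w with
  | nil => simp
  | @cons a b c ha p ih =>
    intro hPu
    obtain ⟨hP, hf⟩ := h _ _ ha hPu
    have h2 := ih hP
    simp only [SimpleGraph.Walk.length_cons, Nat.even_add_one, ← h2]
    cases hab : f a <;> cases hbb : f b <;> cases hcb : f c <;> simp_all

lemma walk_support_closed (P : V → Prop)
    (h : ∀ a b, G.Adj a b → P a → P b) {u v : V} (w : G.Walk u v) (hu : P u) :
    ∀ x ∈ w.support, P x := by
  induction w with
  | nil => simpa using hu
  | cons ha p ih =>
    intro x hx
    rw [SimpleGraph.Walk.support_cons, List.mem_cons] at hx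
    rcases hx with rfl | hx
    · exact hu
    · exact ih (h _ _ ha hu) x hx

lemma cycle_length_le_card [DecidableEq V] {v : V} {w : G.Walk v v}
    (hw : w.IsCycle) (S : Finset V) (hS : ∀ x ∈ w.support, x ∈ S) : w.length ≤ S.card := by
  have hnd : w.support.tail.Nodup := hw.2
  have hlen : w.support.tail.length = w.length := by
    rw [List.length_tail, SimpleGraph.Walk.length_support]; omega
  have hsub : w.support.tail.toFinset ⊆ S := by
    intro x hx
    rw [List.mem_toFinset] at hx
    exact hS x (List.mem_of_mem_tail hx)
  calc w.length = w.support.tail.toFinset.card := by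
        rw [List.toFinset_card_of_nodup hnd, hlen]
    _ ≤ S.card := Finset.card_le_card hsub

lemma cycle_getVert_inj {v : V} {w : G.Walk v v} (hw : w.IsCycle)
    {i j : ℕ} (hi1 : 1 ≤ i) (hi2 : i ≤ w.length) (hj1 : 1 ≤ j) (hj2 : j ≤ w.length)
    (hij : w.getVert i = w.getVert j) : i = j := by
  have hnd : w.support.tail.Nodup := hw.2
  have hlen : w.support.tail.length = w.length := by
    rw [List.length_tail, SimpleGraph.Walk.length_support]; omega
  have hslen : w.support.length = w.length + 1 := SimpleGraph.Walk.length_support w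
  have hi' : i - 1 < w.support.tail.length := by omega
  have hj' : j - 1 < w.support.tail.length := by omega
  have key : ∀ k (hk : k < w.support.tail.length),
      w.support.tail.get ⟨k, hk⟩ = w.getVert (k + 1) := by
    intro k hk
    have hk2 : k + 1 < w.support.length := by omega
    have := my_getVert_eq_support_get w (k + 1) hk2
    rw [← this]
    rw [List.get_tail]
  have e1 := key (i - 1) hi'
  have e2 := key (j - 1) hj'
  rw [show i - 1 + 1 = i by omega] at e1
  rw [show j - 1 + 1 = j by omega] at e2
  have : w.support.tail.get ⟨i - 1, hi'⟩ = w.support.tail.get ⟨j - 1, hj'⟩ := by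
    rw [e1, e2, hij]
  have := (List.Nodup.get_inj_iff hnd).mp this
  have := Fin.mk.inj_iff.mp this
  omega

lemma cycle_getVert_inj' {v : V} {w : G.Walk v v} (hw : w.IsCycle)
    {i j : ℕ} (hi : i < w.length) (hj : j < w.length)
    (hij : w.getVert i = w.getVert j) : i = j := by
  have h3 := hw.three_le_length
  rcases Nat.eq_zero_or_pos i with rfl | hi1
  · rcases Nat.eq_zero_or_pos j with rfl | hj1
    · rfl
    · have hij' : w.getVert w.length = w.getVert j := by
        rw [SimpleGraph.Walk.getVert_length]; rw [SimpleGraph.Walk.getVert_zero] at hij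
        exact hij
      have := cycle_getVert_inj hw (by omega) (le_refl _) hj1 (by omega) hij'
      omega
  · rcases Nat.eq_zero_or_pos j with rfl | hj1
    · have hij' : w.getVert i = w.getVert w.length := by
        rw [SimpleGraph.Walk.getVert_length]; rw [SimpleGraph.Walk.getVert_zero] at hij
        exact hij
      have := cycle_getVert_inj hw hi1 (by omega) (by omega) (le_refl _) hij'
      omega
    · exact cycle_getVert_inj hw hi1 (by omega) hj1 (by omega) hij

lemma cycle_cover_bound [DecidableEq V] {v : V} {w : G.Walk v v} (hw : w.IsCycle)
    (X : Finset V) (h : ∀ i < w.length, w.getVert i ∈ X ∨ w.getVert (i + 1) ∈ X) :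
    w.length ≤ 2 * X.card := by
  classical
  set s : Finset ℕ := Finset.range w.length with hs
  have hsplit := Finset.card_filter_add_card_filter_not
    (s := s) (p := fun i => w.getVert i ∈ X)
  have h1 : (s.filter (fun i => w.getVert i ∈ X)).card ≤ X.card := by
    apply Finset.card_le_card_of_injOn (fun i => w.getVert i)
    · intro i hi
      simp only [Finset.mem_coe, Finset.mem_filter] at hi
      exact hi.2
    · intro i hi j hj hij
      simp only [hs, Finset.mem_coe, Finset.mem_filter, Finset.mem_range] at hi hj
      exact cycle_getVert_inj' hw hi.1 hj.1 hij
  have h2 : (s.filter (fun i => ¬ w.getVert i ∈ X)).card ≤ X.card := by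
    apply Finset.card_le_card_of_injOn (fun i => w.getVert (i + 1))
    · intro i hi
      simp only [hs, Finset.mem_coe, Finset.mem_filter, Finset.mem_range] at hi
      rcases h i hi.1 with h' | h'
      · exact absurd h' hi.2
      · exact h'
    · intro i hi j hj hij
      simp only [hs, Finset.mem_coe, Finset.mem_filter, Finset.mem_range] at hi hj
      have := cycle_getVert_inj hw (by omega) (by omega) (by omega) (by omega) hij
      omega
  have : s.card = w.length := Finset.card_range _
  omega

end Helpers

/-- region function for construction 1: `0 = X_A, 1 = Y_A, 2 = X_B, 3 = Y_B`. -/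
def regA (x a : ℕ) (t : ℕ) : ℕ :=
  if t < x then 0 else if t < a then 1 else if t < a + x then 2 else 3

/-- colour table for construction 1. -/
def gA (i j : ℕ) : Fin 3 :=
  if min i j = 0 ∧ max i j = 0 then 0
  else if min i j = 2 ∧ max i j = 2 then 0
  else if max i j ≤ 1 then 1
  else if 2 ≤ min i j then 1
  else 2

lemma gA_comm (i j : ℕ) : gA i j = gA j i := by
  unfold gA; rw [min_comm i j, max_comm i j]

lemma regA_lt4 (x a t : ℕ) : regA x a t < 4 := by
  unfold regA; split_ifs <;> first | omega | (simp; omega) | simp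

lemma gA_zero : ∀ i < 4, ∀ j < 4,
    (gA i j = 0 ↔ (i = 0 ∧ j = 0) ∨ (i = 2 ∧ j = 2)) := by decide

lemma gA_one : ∀ i < 4, ∀ j < 4,
    (gA i j = 1 ↔ ((i ≤ 1 ∧ j ≤ 1) ∨ (2 ≤ i ∧ 2 ≤ j)) ∧ ¬(i = 0 ∧ j = 0) ∧ ¬(i = 2 ∧ j = 2)) := by
  decide

lemma gA_two : ∀ i < 4, ∀ j < 4,
    (gA i j = 2 ↔ (i ≤ 1 ∧ 2 ≤ j) ∨ (j ≤ 1 ∧ 2 ≤ i)) := by decide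

/-- region function for construction 2: `0 = X₁, 1 = X₂, 2 = Y`. -/
def regB (p q : ℕ) (t : ℕ) : ℕ :=
  if t < p then 0 else if t < p + q then 1 else 2

/-- colour table for construction 2. -/
def gB (i j : ℕ) : Fin 3 :=
  if min i j = 0 ∧ (max i j = 0 ∨ max i j = 2) then 0
  else if min i j = 1 then 1
  else 2

lemma gB_comm (i j : ℕ) : gB i j = gB j i := by
  unfold gB; rw [min_comm i j, max_comm i j]

lemma regB_lt3 (p q t : ℕ) : regB p q t < 3 := by
  unfold regB; split_ifs <;> first | omega | (simp; omega) | simp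

lemma gB_zero : ∀ i < 3, ∀ j < 3,
    (gB i j = 0 ↔ ((i = 0 ∧ j = 0) ∨ (i = 0 ∧ j = 2) ∨ (i = 2 ∧ j = 0))) := by decide

lemma gB_one : ∀ i < 3, ∀ j < 3,
    (gB i j = 1 ↔ ((i = 1 ∧ j = 1) ∨ (i = 1 ∧ j = 2) ∨ (i = 2 ∧ j = 1))) := by decide

lemma gB_two : ∀ i < 3, ∀ j < 3,
    (gB i j = 2 ↔ ((i = 2 ∧ j = 2) ∨ (i = 0 ∧ j = 1) ∨ (i = 1 ∧ j = 0))) := by decide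

lemma card_filter_lt (N x : ℕ) :
    (Finset.univ.filter (fun u : Fin N => u.val < x)).card ≤ x := by
  have := Finset.card_le_card_of_injOn (fun u : Fin N => u.val)
    (s := Finset.univ.filter (fun u : Fin N => u.val < x)) (t := Finset.range x)
    (by intro u hu; simp only [Finset.mem_coe, Finset.mem_filter] at hu; simpa using hu.2)
    (by intro u _ v _ h; exact Fin.val_injective h)
  simpa using this

lemma card_filter_Ico (N x a : ℕ) :
    (Finset.univ.filter (fun u : Fin N => x ≤ u.val ∧ u.val < a)).card ≤ a - x := by
  have := Finset.card_le_card_of_injOn (fun u : Fin N => u.val)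
    (s := Finset.univ.filter (fun u : Fin N => x ≤ u.val ∧ u.val < a)) (t := Finset.Ico x a)
    (by intro u hu; simp only [Finset.mem_coe, Finset.mem_filter] at hu; simpa [Finset.mem_Ico] using hu.2)
    (by intro u _ v _ h; exact Fin.val_injective h)
  simpa [Nat.card_Ico] using this

lemma card_filter_ge (N a : ℕ) :
    (Finset.univ.filter (fun u : Fin N => a ≤ u.val)).card ≤ N - a := by
  have := Finset.card_le_card_of_injOn (fun u : Fin N => u.val)
    (s := Finset.univ.filter (fun u : Fin N => a ≤ u.val)) (t := Finset.Ico a N)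
    (by intro u hu; simp only [Finset.mem_coe, Finset.mem_filter] at hu
        simp [Finset.mem_Ico, hu.2, u.isLt])
    (by intro u _ v _ h; exact Fin.val_injective h)
  simpa [Nat.card_Ico] using this

lemma regA_zero_iff (x a t : ℕ) : regA x a t = 0 ↔ t < x := by
  unfold regA; split_ifs <;> first | omega | (simp; omega) | simp

lemma regA_one_iff (x a t : ℕ) : regA x a t = 1 ↔ x ≤ t ∧ t < a := by
  unfold regA; split_ifs <;> first | omega | (simp; omega) | simp

lemma regA_two_iff (x a t : ℕ) : regA x a t = 2 ↔ x ≤ t ∧ a ≤ t ∧ t < a + x := by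
  unfold regA; split_ifs <;> first | omega | (simp; omega) | simp

lemma regA_three_iff (x a t : ℕ) (hxa : x ≤ a) : regA x a t = 3 ↔ a + x ≤ t := by
  unfold regA; split_ifs <;> first | omega | (simp; omega) | simp

lemma regA_le_one_iff (x a t : ℕ) (hxa : x ≤ a) : regA x a t ≤ 1 ↔ t < a := by
  unfold regA; split_ifs <;> first | omega | (simp; omega) | simp

lemma regA_ge_two_iff (x a t : ℕ) (hxa : x ≤ a) : 2 ≤ regA x a t ↔ a ≤ t := by
  unfold regA; split_ifs <;> first | omega | (simp; omega) | simp

lemma regB_zero_iff (p q t : ℕ) : regB p q t = 0 ↔ t < p := by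
  unfold regB; split_ifs <;> first | omega | (simp; omega) | simp

lemma regB_one_iff (p q t : ℕ) : regB p q t = 1 ↔ p ≤ t ∧ t < p + q := by
  unfold regB; split_ifs <;> first | omega | (simp; omega) | simp

lemma regB_two_iff (p q t : ℕ) : regB p q t = 2 ↔ p + q ≤ t := by
  unfold regB; split_ifs <;> first | omega | (simp; omega) | simp

lemma construction1 (m1 m2 m3 : ℕ) (he2 : m2 % 2 = 0) (ho3 : m3 % 2 = 1)
    (h1 : 4 ≤ m1) (h2 : 4 ≤ m2) (N : ℕ) (hN : N = 2 * m1 + m2 - 4) :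
    ∃ χ : Sym2 (Fin N) → Fin 3,
      ¬ HasCycleLen (colourGraph χ 0) m1 ∧ ¬ HasCycleLen (colourGraph χ 1) m2 ∧
      ¬ HasCycleLen (colourGraph χ 2) m3 := by
  classical
  set x := m1 - 1 with hx
  set a := m1 + m2 / 2 - 2 with ha
  have hxa : x ≤ a := by omega
  set r : ℕ → ℕ := regA x a with hrdef
  set χ : Sym2 (Fin N) → Fin 3 :=
    Sym2.lift ⟨fun u v => gA (r u.val) (r v.val), fun u v => gA_comm _ _⟩ with hχ
  have hχ_eval : ∀ (c : Fin 3) (p q : Fin N), (colourGraph χ c).Adj p q →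
      gA (r p.val) (r q.val) = c := by
    intro c p q hpq
    have h := hpq.2
    simpa [hχ, Sym2.lift_mk] using h
  have hmem : ∀ {G' : SimpleGraph (Fin N)} {v : Fin N} (w : G'.Walk v v) (i : ℕ),
      i ≤ w.length → w.getVert i ∈ w.support := by
    intro G' v w i hi
    exact (SimpleGraph.Walk.mem_support_iff_exists_getVert).mpr ⟨i, rfl, hi⟩
  refine ⟨χ, ?_, ?_, ?_⟩
  · -- colour 0 : cliques X_A, X_B of size m1 - 1
    rintro ⟨v, w, hc, hl⟩
    have hadj : ∀ p q : Fin N, (colourGraph χ 0).Adj p q →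
        (r p.val = 0 ∧ r q.val = 0) ∨ (r p.val = 2 ∧ r q.val = 2) := by
      intro p q hpq
      exact (gA_zero _ (regA_lt4 _ _ _) _ (regA_lt4 _ _ _)).mp (hχ_eval 0 p q hpq)
    have hv := w.adj_snd hc.not_nil
    rcases hadj _ _ hv with ⟨hv0, -⟩ | ⟨hv0, -⟩
    · -- all of the cycle in X_A
      have hclosed : ∀ p q : Fin N, (colourGraph χ 0).Adj p q → r p.val = 0 → r q.val = 0 := by
        intro p q hpq hp
        rcases hadj _ _ hpq with ⟨-, h⟩ | ⟨h, -⟩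
        · exact h
        · omega
      have hsupp := walk_support_closed (fun u => r u.val = 0) hclosed w hv0
      have hcard := cycle_length_le_card hc (Finset.univ.filter (fun u : Fin N => u.val < x))
        (by intro y hy
            simp only [Finset.mem_filter, Finset.mem_univ, true_and]
            exact (regA_zero_iff x a y.val).mp (hsupp y hy))
      have := card_filter_lt N x
      omega
    · have hclosed : ∀ p q : Fin N, (colourGraph χ 0).Adj p q → r p.val = 2 → r q.val = 2 := by
        intro p q hpq hp
        rcases hadj _ _ hpq with ⟨h, -⟩ | ⟨-, h⟩
        · omega
        · exact h
      have hsupp := walk_support_closed (fun u => r u.val = 2) hclosed w hv0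
      have hcard := cycle_length_le_card hc
        (Finset.univ.filter (fun u : Fin N => a ≤ u.val ∧ u.val < a + x))
        (by intro y hy
            simp only [Finset.mem_filter, Finset.mem_univ, true_and]
            have := (regA_two_iff x a y.val).mp (hsupp y hy)
            omega)
      have := card_filter_Ico N a (a + x)
      omega
  · -- colour 1
    rintro ⟨v, w, hc, hl⟩
    have hadj : ∀ p q : Fin N, (colourGraph χ 1).Adj p q →
        ((r p.val ≤ 1 ∧ r q.val ≤ 1) ∨ (2 ≤ r p.val ∧ 2 ≤ r q.val)) ∧
          ¬(r p.val = 0 ∧ r q.val = 0) ∧ ¬(r p.val = 2 ∧ r q.val = 2) := by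
      intro p q hpq
      exact (gA_one _ (regA_lt4 _ _ _) _ (regA_lt4 _ _ _)).mp (hχ_eval 1 p q hpq)
    by_cases hv0 : v.val < a
    · have hclosed : ∀ p q : Fin N, (colourGraph χ 1).Adj p q → p.val < a → q.val < a := by
        intro p q hpq hp
        rcases (hadj _ _ hpq).1 with ⟨-, h⟩ | ⟨h, -⟩
        · exact (regA_le_one_iff x a q.val hxa).mp h
        · have := (regA_ge_two_iff x a p.val hxa).mp h
          omega
      have hsupp := walk_support_closed (fun u : Fin N => u.val < a) hclosed w hv0
      have hcover := cycle_cover_bound hc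
        (Finset.univ.filter (fun u : Fin N => x ≤ u.val ∧ u.val < a))
        (by intro i hi
            have hadj' := w.adj_getVert_succ hi
            have hm1 := hsupp _ (hmem w i (by omega))
            have hm2 := hsupp _ (hmem w (i + 1) (by omega))
            obtain ⟨hside, hn0, -⟩ := hadj _ _ hadj'
            have e1 : r (w.getVert i).val ≤ 1 := (regA_le_one_iff x a _ hxa).mpr hm1
            have e2 : r (w.getVert (i + 1)).val ≤ 1 := (regA_le_one_iff x a _ hxa).mpr hm2
            have : r (w.getVert i).val = 1 ∨ r (w.getVert (i + 1)).val = 1 := by omega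
            rcases this with h' | h'
            · left
              simp only [Finset.mem_filter, Finset.mem_univ, true_and]
              exact (regA_one_iff x a _).mp h'
            · right
              simp only [Finset.mem_filter, Finset.mem_univ, true_and]
              exact (regA_one_iff x a _).mp h')
      have := card_filter_Ico N x a
      omega
    · have hclosed : ∀ p q : Fin N, (colourGraph χ 1).Adj p q → a ≤ p.val → a ≤ q.val := by
        intro p q hpq hp
        rcases (hadj _ _ hpq).1 with ⟨h, -⟩ | ⟨-, h⟩
        · have := (regA_le_one_iff x a p.val hxa).mp h
          omega
        · exact (regA_ge_two_iff x a q.val hxa).mp h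
      have hsupp := walk_support_closed (fun u : Fin N => a ≤ u.val) hclosed w (by omega)
      have hcover := cycle_cover_bound hc
        (Finset.univ.filter (fun u : Fin N => a + x ≤ u.val))
        (by intro i hi
            have hadj' := w.adj_getVert_succ hi
            have hm1 := hsupp _ (hmem w i (by omega))
            have hm2 := hsupp _ (hmem w (i + 1) (by omega))
            obtain ⟨hside, -, hn2⟩ := hadj _ _ hadj'
            have e1 : 2 ≤ r (w.getVert i).val := (regA_ge_two_iff x a _ hxa).mpr hm1
            have e2 : 2 ≤ r (w.getVert (i + 1)).val := (regA_ge_two_iff x a _ hxa).mpr hm2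
            have h4a : r (w.getVert i).val < 4 := regA_lt4 x a _
            have h4b : r (w.getVert (i + 1)).val < 4 := regA_lt4 x a _
            have : r (w.getVert i).val = 3 ∨ r (w.getVert (i + 1)).val = 3 := by omega
            rcases this with h' | h'
            · left
              simp only [Finset.mem_filter, Finset.mem_univ, true_and]
              exact (regA_three_iff x a _ hxa).mp h'
            · right
              simp only [Finset.mem_filter, Finset.mem_univ, true_and]
              exact (regA_three_iff x a _ hxa).mp h')
      have := card_filter_ge N (a + x)
      omega
  · -- colour 2 : bipartite between A and B
    rintro ⟨v, w, hc, hl⟩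
    have hpar := walk_parity (G := colourGraph χ 2) (fun u : Fin N => decide (a ≤ u.val))
      (fun _ => True)
      (by intro p q hpq _
          refine ⟨trivial, ?_⟩
          have := (gA_two _ (regA_lt4 _ _ _) _ (regA_lt4 _ _ _)).mp (hχ_eval 2 p q hpq)
          rcases this with ⟨hp1, hq2⟩ | ⟨hq1, hp2⟩
          · have e1 : p.val < a := (regA_le_one_iff x a p.val hxa).mp hp1
            have e2 : a ≤ q.val := (regA_ge_two_iff x a q.val hxa).mp hq2
            simp [e2, Nat.not_le.mpr e1]
          · have e1 : q.val < a := (regA_le_one_iff x a q.val hxa).mp hq1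
            have e2 : a ≤ p.val := (regA_ge_two_iff x a p.val hxa).mp hp2
            simp [e2, Nat.not_le.mpr e1])
      w trivial
    have : Even w.length := hpar.mp rfl
    rw [hl] at this
    rw [Nat.even_iff] at this
    omega

lemma construction2 (m1 m2 m3 : ℕ) (he1 : m1 % 2 = 0) (he2 : m2 % 2 = 0) (ho3 : m3 % 2 = 1)
    (h1 : 4 ≤ m1) (h2 : 4 ≤ m2) (h3 : 3 ≤ m3) (N : ℕ)
    (hN : N = m1 / 2 + m2 / 2 + m3 - 3) :
    ∃ χ : Sym2 (Fin N) → Fin 3,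
      ¬ HasCycleLen (colourGraph χ 0) m1 ∧ ¬ HasCycleLen (colourGraph χ 1) m2 ∧
      ¬ HasCycleLen (colourGraph χ 2) m3 := by
  classical
  set p := m1 / 2 - 1 with hp
  set q := m2 / 2 - 1 with hq
  set r : ℕ → ℕ := regB p q with hrdef
  set χ : Sym2 (Fin N) → Fin 3 :=
    Sym2.lift ⟨fun u v => gB (r u.val) (r v.val), fun u v => gB_comm _ _⟩ with hχ
  have hχ_eval : ∀ (c : Fin 3) (s t : Fin N), (colourGraph χ c).Adj s t →
      gB (r s.val) (r t.val) = c := by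
    intro c s t hst
    have h := hst.2
    simpa [hχ, Sym2.lift_mk] using h
  have hmem : ∀ {G' : SimpleGraph (Fin N)} {v : Fin N} (w : G'.Walk v v) (i : ℕ),
      i ≤ w.length → w.getVert i ∈ w.support := by
    intro G' v w i hi
    exact (SimpleGraph.Walk.mem_support_iff_exists_getVert).mpr ⟨i, rfl, hi⟩
  refine ⟨χ, ?_, ?_, ?_⟩
  · -- colour 0 : edges X₁X₁ and X₁Y, covered by X₁ of size m1/2 - 1
    rintro ⟨v, w, hc, hl⟩
    have hcover := cycle_cover_bound hc
      (Finset.univ.filter (fun u : Fin N => u.val < p))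
      (by intro i hi
          have hadj' := w.adj_getVert_succ hi
          have := (gB_zero _ (regB_lt3 _ _ _) _ (regB_lt3 _ _ _)).mp (hχ_eval 0 _ _ hadj')
          have : r (w.getVert i).val = 0 ∨ r (w.getVert (i + 1)).val = 0 := by tauto
          rcases this with h' | h'
          · left
            simp only [Finset.mem_filter, Finset.mem_univ, true_and]
            exact (regB_zero_iff p q _).mp h'
          · right
            simp only [Finset.mem_filter, Finset.mem_univ, true_and]
            exact (regB_zero_iff p q _).mp h')
    have := card_filter_lt N p
    omega
  · -- colour 1 : edges X₂X₂ and X₂Y, covered by X₂ of size m2/2 - 1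
    rintro ⟨v, w, hc, hl⟩
    have hcover := cycle_cover_bound hc
      (Finset.univ.filter (fun u : Fin N => p ≤ u.val ∧ u.val < p + q))
      (by intro i hi
          have hadj' := w.adj_getVert_succ hi
          have := (gB_one _ (regB_lt3 _ _ _) _ (regB_lt3 _ _ _)).mp (hχ_eval 1 _ _ hadj')
          have : r (w.getVert i).val = 1 ∨ r (w.getVert (i + 1)).val = 1 := by tauto
          rcases this with h' | h'
          · left
            simp only [Finset.mem_filter, Finset.mem_univ, true_and]
            exact (regB_one_iff p q _).mp h'
          · right
            simp only [Finset.mem_filter, Finset.mem_univ, true_and]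
            exact (regB_one_iff p q _).mp h')
    have := card_filter_Ico N p (p + q)
    omega
  · -- colour 2 : clique on Y (size m3 - 1) plus bipartite X₁X₂
    rintro ⟨v, w, hc, hl⟩
    have hadj : ∀ s t : Fin N, (colourGraph χ 2).Adj s t →
        (r s.val = 2 ∧ r t.val = 2) ∨ (r s.val = 0 ∧ r t.val = 1) ∨
          (r s.val = 1 ∧ r t.val = 0) := by
      intro s t hst
      exact (gB_two _ (regB_lt3 _ _ _) _ (regB_lt3 _ _ _)).mp (hχ_eval 2 _ _ hst)
    by_cases hv0 : p + q ≤ v.val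
    · have hclosed : ∀ s t : Fin N, (colourGraph χ 2).Adj s t →
          p + q ≤ s.val → p + q ≤ t.val := by
        intro s t hst hs
        have hs2 : r s.val = 2 := (regB_two_iff p q s.val).mpr hs
        rcases hadj _ _ hst with ⟨-, h⟩ | ⟨h, -⟩ | ⟨h, -⟩
        · exact (regB_two_iff p q t.val).mp h
        · omega
        · omega
      have hsupp := walk_support_closed (fun u : Fin N => p + q ≤ u.val) hclosed w hv0
      have hcard := cycle_length_le_card hc
        (Finset.univ.filter (fun u : Fin N => p + q ≤ u.val))
        (by intro y hy
            simp only [Finset.mem_filter, Finset.mem_univ, true_and]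
            exact hsupp y hy)
      have := card_filter_ge N (p + q)
      omega
    · have hpar := walk_parity (G := colourGraph χ 2) (fun u : Fin N => decide (p ≤ u.val))
        (fun u : Fin N => u.val < p + q)
        (by intro s t hst hs
            have hs2 : r s.val ≠ 2 := by
              intro h'
              have := (regB_two_iff p q s.val).mp h'
              omega
            rcases hadj _ _ hst with ⟨h, -⟩ | ⟨h0, h1⟩ | ⟨h1, h0⟩
            · exact absurd h hs2
            · have e0 : s.val < p := (regB_zero_iff p q s.val).mp h0
              have e1 := (regB_one_iff p q t.val).mp h1
              refine ⟨by omega, ?_⟩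
              simp [Nat.not_lt.mpr e1.1, Nat.not_le.mpr e0, e1.1]
            · have e1 := (regB_one_iff p q s.val).mp h1
              have e0 : t.val < p := (regB_zero_iff p q t.val).mp h0
              refine ⟨by omega, ?_⟩
              simp [Nat.not_le.mpr e0, e1.1])
        w (by omega)
      have : Even w.length := hpar.mp rfl
      rw [hl, Nat.even_iff] at this
      omega

lemma ramsey_mono {m1 m2 m3 N N' : ℕ} (hNN' : N ≤ N') (χ : Sym2 (Fin N') → Fin 3)
    (h0 : ¬ HasCycleLen (colourGraph χ 0) m1) (h1 : ¬ HasCycleLen (colourGraph χ 1) m2)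
    (h2 : ¬ HasCycleLen (colourGraph χ 2) m3) :
    ¬ CycleRamseyProp m1 m2 m3 N := by
  intro hR
  set e : Fin N → Fin N' := Fin.castLE hNN' with he
  have hinj : Function.Injective e := Fin.castLE_injective hNN'
  set χ' : Sym2 (Fin N) → Fin 3 := fun s => χ (s.map e) with hχ'
  have key : ∀ (i : Fin 3) (m : ℕ), HasCycleLen (colourGraph χ' i) m →
      HasCycleLen (colourGraph χ i) m := by
    rintro i m ⟨v, w, hc, hl⟩
    have hhom : ∀ a b : Fin N, (colourGraph χ' i).Adj a b → (colourGraph χ i).Adj (e a) (e b) := by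
      rintro a b ⟨hne, hcol⟩
      refine ⟨fun h => hne (hinj h), ?_⟩
      rw [hχ'] at hcol
      simpa [Sym2.map_pair_eq] using hcol
    let φ : colourGraph χ' i →g colourGraph χ i := ⟨e, fun h => hhom _ _ h⟩
    refine ⟨e v, w.map φ, ?_, by simp [hl]⟩
    exact hc.map (f := φ) hinj
  rcases hR χ' with h | h | h
  · exact h0 (key 0 m1 h)
  · exact h1 (key 1 m2 h)
  · exact h2 (key 2 m3 h)


/-- Lower bound: for all `α₁, α₂, α₃ > 0` and all sufficiently large `n`,
`R(C⟪α₁n⟫, C⟪α₂n⟫, C⟨α₃n⟩) ≥ max {2⟪α₁n⟫ + ⟪α₂n⟫ - 3, ⟪α₁n⟫/2 + ⟪α₂n⟫/2 + ⟨α₃n⟩ - 2}`;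
that is, there is a 3-colouring of the complete graph on
`max {2⟪α₁n⟫ + ⟪α₂n⟫ - 4, ⟪α₁n⟫/2 + ⟪α₂n⟫/2 + ⟨α₃n⟩ - 3}` vertices with no cycle on `⟪α₁n⟫`
vertices in colour 1, no cycle on `⟪α₂n⟫` vertices in colour 2 and no cycle on `⟨α₃n⟩` vertices
in colour 3. -/
theorem mixed_parity_ramsey_lower (α₁ α₂ α₃ : ℝ) (hα₁ : 0 < α₁) (hα₂ : 0 < α₂) (hα₃ : 0 < α₃) :
    ∃ n₀ : ℕ, 0 < n₀ ∧ ∀ n : ℕ, n₀ < n →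
      (∀ N : ℕ, CycleRamseyProp (evenFloor (α₁ * n)).toNat (evenFloor (α₂ * n)).toNat
          (oddFloor (α₃ * n)).toNat N →
        (max (2 * evenFloor (α₁ * n) + evenFloor (α₂ * n) - 3)
          (evenFloor (α₁ * n) / 2 + evenFloor (α₂ * n) / 2 + oddFloor (α₃ * n) - 2)).toNat ≤ N) ∧
      ∃ χ : Sym2 (Fin (max (2 * evenFloor (α₁ * n) + evenFloor (α₂ * n) - 4)
          (evenFloor (α₁ * n) / 2 + evenFloor (α₂ * n) / 2 + oddFloor (α₃ * n) - 3)).toNat) →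
            Fin 3,
        ¬ HasCycleLen (colourGraph χ 0) (evenFloor (α₁ * n)).toNat ∧
        ¬ HasCycleLen (colourGraph χ 1) (evenFloor (α₂ * n)).toNat ∧
        ¬ HasCycleLen (colourGraph χ 2) (oddFloor (α₃ * n)).toNat := by
  refine ⟨⌈(100 : ℝ) / α₁⌉₊ + ⌈(100 : ℝ) / α₂⌉₊ + ⌈(100 : ℝ) / α₃⌉₊ + 1, by omega, ?_⟩
  intro n hn
  -- basic size estimates
  have hbig : ∀ α : ℝ, 0 < α → ⌈(100 : ℝ) / α⌉₊ ≤ n → (100 : ℝ) ≤ α * n := by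
    intro α hα hle
    have h1 : (100 : ℝ) / α ≤ ⌈(100 : ℝ) / α⌉₊ := Nat.le_ceil _
    have h2 : ((⌈(100 : ℝ) / α⌉₊ : ℝ)) ≤ (n : ℝ) := by exact_mod_cast hle
    have := (div_le_iff₀ hα).mp (h1.trans h2)
    linarith [this]
  have h1 : (100 : ℝ) ≤ α₁ * n := hbig α₁ hα₁ (by omega)
  have h2 : (100 : ℝ) ≤ α₂ * n := hbig α₂ hα₂ (by omega)
  have h3 : (100 : ℝ) ≤ α₃ * n := hbig α₃ hα₃ (by omega)
  set M1 : ℤ := evenFloor (α₁ * n) with hM1def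
  set M2 : ℤ := evenFloor (α₂ * n) with hM2def
  set M3 : ℤ := oddFloor (α₃ * n) with hM3def
  have hM1 : (98 : ℤ) ≤ M1 := by
    have : (49 : ℤ) ≤ ⌊α₁ * n / 2⌋ := Int.le_floor.mpr (by push_cast; linarith)
    rw [hM1def]; unfold evenFloor; omega
  have hM2 : (98 : ℤ) ≤ M2 := by
    have : (49 : ℤ) ≤ ⌊α₂ * n / 2⌋ := Int.le_floor.mpr (by push_cast; linarith)
    rw [hM2def]; unfold evenFloor; omega
  have hM3 : (98 : ℤ) ≤ M3 := by
    have : (49 : ℤ) ≤ ⌊(α₃ * n - 1) / 2⌋ := Int.le_floor.mpr (by push_cast; linarith)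
    rw [hM3def]; unfold oddFloor; omega
  have hM1e : M1 % 2 = 0 := by rw [hM1def]; unfold evenFloor; omega
  have hM2e : M2 % 2 = 0 := by rw [hM2def]; unfold evenFloor; omega
  have hM3o : M3 % 2 = 1 := by rw [hM3def]; unfold oddFloor; omega
  set m1 : ℕ := M1.toNat with hm1def
  set m2 : ℕ := M2.toNat with hm2def
  set m3 : ℕ := M3.toNat with hm3def
  have hc1 : (m1 : ℤ) = M1 := Int.toNat_of_nonneg (by omega)
  have hc2 : (m2 : ℤ) = M2 := Int.toNat_of_nonneg (by omega)
  have hc3 : (m3 : ℤ) = M3 := Int.toNat_of_nonneg (by omega)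
  have hm1e : m1 % 2 = 0 := by omega
  have hm2e : m2 % 2 = 0 := by omega
  have hm3o : m3 % 2 = 1 := by omega
  have hm1b : 98 ≤ m1 := by omega
  have hm2b : 98 ≤ m2 := by omega
  have hm3b : 98 ≤ m3 := by omega
  set N' : ℕ := (max (2 * M1 + M2 - 4) (M1 / 2 + M2 / 2 + M3 - 3)).toNat with hN'def
  have hN'eq : N' = max (2 * m1 + m2 - 4) (m1 / 2 + m2 / 2 + m3 - 3) := by omega
  -- obtain the colouring on N' vertices
  have hχ : ∃ χ : Sym2 (Fin N') → Fin 3,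
      ¬ HasCycleLen (colourGraph χ 0) m1 ∧ ¬ HasCycleLen (colourGraph χ 1) m2 ∧
      ¬ HasCycleLen (colourGraph χ 2) m3 := by
    rcases le_total (m1 / 2 + m2 / 2 + m3 - 3) (2 * m1 + m2 - 4) with hle | hle
    · exact construction1 m1 m2 m3 hm2e hm3o (by omega) (by omega) N' (by omega)
    · exact construction2 m1 m2 m3 hm1e hm2e hm3o (by omega) (by omega) (by omega) N' (by omega)
  obtain ⟨χ, hχ0, hχ1, hχ2⟩ := hχ
  constructor
  · intro N hR
    by_contra hlt
    push_neg at hlt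
    have hNle : N ≤ N' := by omega
    exact ramsey_mono hNle χ hχ0 hχ1 hχ2 hR
  · exact ⟨χ, hχ0, hχ1, hχ2⟩
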